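/- arXiv:2006.14364 — 2 statements merged into one kernel-verified Lean document; each statement's English description precedes it below -/
import Mathlib

section
/- Let C = Φᵀ Ξ Φ be invertible, A and b arbitrary of compatible dimensions, V ∈ ℝ^n, Π = Φ(ΦᵀΞΦ)⁻¹ΦᵀΞ the ξ-weighted projection onto the column space of Φ, and suppose Φᵀ Ξ (R + γPΦθ - Φθ) = b - Aθ for all θ (where V = R + γPV). Then for any θ with v̂ = Φθ: V - v̂ = (I - γΠP)⁻¹ [(V - ΠV) + Φ C⁻¹ (b - Aθ)], provided I - γΠP is invertible. -/
open Matrix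

/-- Value error decomposition:
`V - Φθ = (I - γΠP)⁻¹ [(V - ΠV) + Φ C⁻¹ (b - Aθ)]`. -/
theorem value_error_decomposition {n d : ℕ}
    (Φ : Matrix (Fin n) (Fin d) ℝ) (ξ : Fin n → ℝ) (hξ : ∀ s, 0 < ξ s)
    (P : Matrix (Fin n) (Fin n) ℝ) (R V : Fin n → ℝ) (γ : ℝ)
    (hγ0 : 0 ≤ γ) (hγ1 : γ < 1)
    (C : Matrix (Fin d) (Fin d) ℝ) (hC : C = Φᵀ * Matrix.diagonal ξ * Φ)
    (hCinv : IsUnit C.det)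
    (Pi : Matrix (Fin n) (Fin n) ℝ) (hPi : Pi = Φ * C⁻¹ * Φᵀ * Matrix.diagonal ξ)
    (A : Matrix (Fin d) (Fin d) ℝ)
    (hA : A = Φᵀ * Matrix.diagonal ξ * (1 - γ • P) * Φ)
    (b : Fin d → ℝ) (hb : b = Φᵀ *ᵥ (Matrix.diagonal ξ *ᵥ R))
    (hBellman : V = R + γ • (P *ᵥ V))
    (hinv : IsUnit (1 - γ • (Pi * P)).det) :
    ∀ θ : Fin d → ℝ,
      V - Φ *ᵥ θ =
        (1 - γ • (Pi * P))⁻¹ *ᵥ ((V - Pi *ᵥ V) + Φ *ᵥ (C⁻¹ *ᵥ (b - A *ᵥ θ))) := by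
  intro θ
  have hPiΦ : Pi * Φ = Φ := by
    rw [hPi]
    have h1 : Φ * C⁻¹ * Φᵀ * Matrix.diagonal ξ * Φ = Φ * (C⁻¹ * C) := by
      rw [hC]; simp only [Matrix.mul_assoc]
    rw [h1, Matrix.nonsing_inv_mul C hCinv, Matrix.mul_one]
  have hb' : Φ *ᵥ (C⁻¹ *ᵥ b) = Pi *ᵥ R := by
    rw [hb, hPi]
    simp only [Matrix.mulVec_mulVec, Matrix.mul_assoc]
  have hA' : Φ *ᵥ (C⁻¹ *ᵥ (A *ᵥ θ)) = Φ *ᵥ θ - γ • ((Pi * P) *ᵥ (Φ *ᵥ θ)) := by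
    have hM : Φ * C⁻¹ * A = Φ - γ • (Pi * P * Φ) := by
      rw [hA, hPi]
      rw [show Φᵀ * Matrix.diagonal ξ * (1 - γ • P) * Φ
            = Φᵀ * (Matrix.diagonal ξ * ((1 - γ • P) * Φ)) by
        simp only [Matrix.mul_assoc]]
      rw [Matrix.sub_mul, Matrix.one_mul, Matrix.smul_mul,
        Matrix.mul_sub, Matrix.mul_sub, Matrix.mul_sub]
      rw [Matrix.mul_smul, Matrix.mul_smul, Matrix.mul_smul]
      have h2 : Φ * C⁻¹ * (Φᵀ * (Matrix.diagonal ξ * Φ)) = Φ := by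
        rw [← Matrix.mul_assoc Φᵀ, ← hC, Matrix.mul_assoc,
          Matrix.nonsing_inv_mul C hCinv, Matrix.mul_one]
      rw [h2]
      congr 1
      simp only [Matrix.mul_assoc]
    calc Φ *ᵥ (C⁻¹ *ᵥ (A *ᵥ θ)) = (Φ * C⁻¹ * A) *ᵥ θ := by
          simp only [Matrix.mulVec_mulVec, Matrix.mul_assoc]
      _ = Φ *ᵥ θ - γ • ((Pi * P) *ᵥ (Φ *ᵥ θ)) := by
          rw [hM, Matrix.sub_mulVec, Matrix.smul_mulVec,
            Matrix.mulVec_mulVec, Matrix.mul_assoc]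
  have hPiV : Pi *ᵥ V = Pi *ᵥ R + γ • ((Pi * P) *ᵥ V) := by
    conv_lhs => rw [hBellman]
    rw [Matrix.mulVec_add, Matrix.mulVec_smul, Matrix.mulVec_mulVec]
  have key : (1 - γ • (Pi * P)) *ᵥ (V - Φ *ᵥ θ)
      = (V - Pi *ᵥ V) + Φ *ᵥ (C⁻¹ *ᵥ (b - A *ᵥ θ)) := by
    rw [Matrix.mulVec_sub, Matrix.sub_mulVec, Matrix.sub_mulVec,
      Matrix.one_mulVec, Matrix.one_mulVec, Matrix.smul_mulVec,
      Matrix.smul_mulVec]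
    rw [Matrix.mulVec_sub, Matrix.mulVec_sub, hb', hA', hPiV]
    abel
  rw [← key, Matrix.mulVec_mulVec, Matrix.nonsing_inv_mul _ hinv, Matrix.one_mulVec]
end

section
/- Let Φ be an n×d matrix, Ξ an n×n diagonal positive definite matrix, P an n×n matrix, and suppose the block matrix [[ΦᵀΞΦ, ΦᵀΞPΦ],[ΦᵀPᵀΞΦ, ΦᵀΞΦ]] is positive semidefinite. Then for any θ ∈ ℝ^d, ‖ΠPΦθ‖_ξ ≤ ‖Φθ‖_ξ, where Π = Φ(ΦᵀΞΦ)⁻¹ΦᵀΞ is the ξ-weighted projection (assuming ΦᵀΞΦ invertible) and ‖v‖_ξ = √(vᵀΞv). -/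
open Matrix

private lemma mulVec_dot {n d : ℕ} (A : Matrix (Fin n) (Fin d) ℝ)
    (x : Fin d → ℝ) (y : Fin n → ℝ) :
    (A *ᵥ x) ⬝ᵥ y = x ⬝ᵥ (Aᵀ *ᵥ y) := by
  rw [Matrix.dotProduct_mulVec, Matrix.vecMul_transpose, dotProduct_comm]

/-- If the block matrix `[[ΦᵀΞΦ, ΦᵀΞPΦ],[ΦᵀPᵀΞΦ, ΦᵀΞΦ]]` is PSD then
`‖ΠPΦθ‖_ξ ≤ ‖Φθ‖_ξ` for all `θ`. -/
theorem block_psd_nonexpansive {n d : ℕ}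
    (Φ : Matrix (Fin n) (Fin d) ℝ) (ξ : Fin n → ℝ) (hξ : ∀ s, 0 < ξ s)
    (P : Matrix (Fin n) (Fin n) ℝ)
    (hCinv : IsUnit (Φᵀ * Matrix.diagonal ξ * Φ).det)
    (hblock : (Matrix.fromBlocks
        (Φᵀ * Matrix.diagonal ξ * Φ) (Φᵀ * Matrix.diagonal ξ * P * Φ)
        (Φᵀ * Pᵀ * Matrix.diagonal ξ * Φ) (Φᵀ * Matrix.diagonal ξ * Φ)).PosSemidef)
    (Pi : Matrix (Fin n) (Fin n) ℝ)
    (hPi : Pi = Φ * (Φᵀ * Matrix.diagonal ξ * Φ)⁻¹ * Φᵀ * Matrix.diagonal ξ) :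
    ∀ θ : Fin d → ℝ,
      Real.sqrt ((Pi *ᵥ (P *ᵥ (Φ *ᵥ θ))) ⬝ᵥ
          (Matrix.diagonal ξ *ᵥ (Pi *ᵥ (P *ᵥ (Φ *ᵥ θ))))) ≤
        Real.sqrt ((Φ *ᵥ θ) ⬝ᵥ (Matrix.diagonal ξ *ᵥ (Φ *ᵥ θ))) := by
  intro θ
  set D := Matrix.diagonal ξ with hDdef
  set C := Φᵀ * D * Φ with hCdef
  set B := Φᵀ * D * P * Φ with hBdef
  have hDsym : Dᵀ = D := Matrix.diagonal_transpose ξ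
  have hCsym : Cᵀ = C := by
    rw [hCdef, Matrix.transpose_mul, Matrix.transpose_mul, hDsym, Matrix.transpose_transpose,
      Matrix.mul_assoc]
  have hCherm : C.IsHermitian := by
    rw [Matrix.IsHermitian, Matrix.conjTranspose_eq_transpose_of_trivial, hCsym]
  haveI : Invertible C := C.invertibleOfIsUnitDet hCinv
  -- C is positive definite
  have hCpsd : C.PosSemidef := by
    have := hblock.submatrix (Sum.inl : Fin d → Fin d ⊕ Fin d)
    convert this using 1
    ext i j; rfl
  have hCpd : C.PosDef := by
    refine .of_dotProduct_mulVec_pos hCherm fun x hx => lt_of_le_of_ne (hCpsd.dotProduct_mulVec_nonneg x) fun h => hx ?_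
    have hz : C *ᵥ x = 0 := (hCpsd.dotProduct_mulVec_zero_iff x).mp h.symm
    have := congrArg (fun v => C⁻¹ *ᵥ v) hz
    simpa [Matrix.mulVec_mulVec, Matrix.nonsing_inv_mul C hCinv] using this
  -- rewrite block matrix with Bᴴ
  have hBH : Φᵀ * Pᵀ * D * Φ = Bᴴ := by
    rw [Matrix.conjTranspose_eq_transpose_of_trivial, hBdef,
      Matrix.transpose_mul, Matrix.transpose_mul, Matrix.transpose_mul, hDsym,
      Matrix.transpose_transpose, Matrix.mul_assoc, Matrix.mul_assoc]
  rw [hBH] at hblock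
  have hS : (C - Bᴴ * C⁻¹ * B).PosSemidef :=
    (Matrix.PosDef.fromBlocks₁₁ B C hCpd).mp hblock
  have hkey : 0 ≤ θ ⬝ᵥ ((C - Bᴴ * C⁻¹ * B) *ᵥ θ) := by
    simpa using hS.dotProduct_mulVec_nonneg θ
  have hCinvsym : (C⁻¹)ᵀ = C⁻¹ := by
    rw [Matrix.transpose_nonsing_inv, hCsym]
  -- compute both quadratic forms
  have hRHS : (Φ *ᵥ θ) ⬝ᵥ (D *ᵥ (Φ *ᵥ θ)) = θ ⬝ᵥ (C *ᵥ θ) := by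
    rw [mulVec_dot, Matrix.mulVec_mulVec, Matrix.mulVec_mulVec, hCdef, Matrix.mul_assoc]
  have hw : Pi *ᵥ (P *ᵥ (Φ *ᵥ θ)) = Φ *ᵥ ((C⁻¹ * B) *ᵥ θ) := by
    rw [hPi]
    simp only [Matrix.mulVec_mulVec]
    congr 1
    rw [hBdef]
    simp only [Matrix.mul_assoc]
  have hcancel : Φᵀ * D * Φ * (C⁻¹ * B) = B := by
    rw [← hCdef]
    exact Matrix.mul_nonsing_inv_cancel_left C B hCinv
  have hLHS : (Pi *ᵥ (P *ᵥ (Φ *ᵥ θ))) ⬝ᵥ (D *ᵥ (Pi *ᵥ (P *ᵥ (Φ *ᵥ θ)))) =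
      θ ⬝ᵥ ((Bᴴ * C⁻¹ * B) *ᵥ θ) := by
    rw [hw, mulVec_dot, Matrix.mulVec_mulVec, Matrix.mulVec_mulVec, Matrix.mulVec_mulVec,
      hcancel, mulVec_dot, Matrix.mulVec_mulVec,
      Matrix.transpose_mul, hCinvsym, Matrix.conjTranspose_eq_transpose_of_trivial]
  apply Real.sqrt_le_sqrt
  rw [hLHS, hRHS]
  have h2 := hkey
  rw [Matrix.sub_mulVec, dotProduct_sub] at h2
  linarith
end
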